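/- arXiv:2502.01416 — 2 statements merged into one kernel-verified Lean document; each statement's English description precedes it below -/
import Mathlib

section
/- Let X be a nonempty finite set, N ≥ 1, and let q^ref be a Markov process on X^{N+2} with full support. Let q be a process on X^{N+2} with full support that is both Markov and reciprocal with respect to q^ref. Then there exist strictly positive functions ψ, φ : X → (0, ∞) such that q(x_0, x_1) = ψ(x_0) · q^ref(x_1 | x_0) · φ(x_1) for all x_0, x_1 ∈ X, where q(x_0, x_1) is the endpoint marginal of q and q^ref(x_1 | x_0) is the conditional of the endpoint marginal of q^ref. -/
open Finset

/-- A probability mass function on a finite type. -/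
def IsPMF {Z : Type*} [Fintype Z] (p : Z → ℝ) : Prop :=
  (∀ z, 0 ≤ p z) ∧ ∑ z, p z = 1

/-- KL divergence between two pmfs on a finite type (with `0 log 0 := 0`,
which is automatic since `0 * log (0/b) = 0`). -/
noncomputable def KLd {Z : Type*} [Fintype Z] (a b : Z → ℝ) : ℝ :=
  ∑ z, a z * Real.log (a z / b z)

/-- Trajectories with `N` intermediate time steps: indices `0, 1, …, N+1`,
where index `0` is time `0` and index `N+1` is time `1`. -/
abbrev Traj (X : Type*) (N : ℕ) := Fin (N + 2) → X

variable {X : Type*} [Fintype X] [DecidableEq X] {N : ℕ}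

/-- One-time marginal of a process at time index `i`. -/
noncomputable def timeMarg (q : Traj X N → ℝ) (i : Fin (N + 2)) (x : X) : ℝ :=
  ∑ ω : Traj X N, if ω i = x then q ω else 0

/-- Joint marginal of the endpoints `(x_0, x_1)`. -/
noncomputable def endMarg (q : Traj X N → ℝ) (a b : X) : ℝ :=
  ∑ ω : Traj X N, if ω 0 = a ∧ ω (Fin.last (N + 1)) = b then q ω else 0

/-- Joint marginal at the neighboring time indices `n` and `n+1`. -/
noncomputable def pairMarg (q : Traj X N → ℝ) (n : Fin (N + 1)) (y z : X) : ℝ :=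
  ∑ ω : Traj X N, if ω n.castSucc = y ∧ ω n.succ = z then q ω else 0

/-- Transition probability `q(x_{t_n} = z | x_{t_{n-1}} = y)` for the step from
time index `n` to `n+1`. -/
noncomputable def transP (q : Traj X N → ℝ) (n : Fin (N + 1)) (y z : X) : ℝ :=
  pairMarg q n y z / timeMarg q n.castSucc y

/-- Glue endpoints `a`, `b` and inner states `v` into a trajectory. -/
def glue (a : X) (v : Fin N → X) (b : X) : Traj X N :=
  Fin.cons a (Fin.snoc v b)

/-- The bridge `q(x_in | x_0 = a, x_1 = b)`, as a function of the inner states. -/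
noncomputable def bridge (q : Traj X N → ℝ) (a b : X) (v : Fin N → X) : ℝ :=
  q (glue a v b) / endMarg q a b

/-- A process is Markov if it factorizes through its one-step transitions. -/
def IsMarkov (q : Traj X N → ℝ) : Prop :=
  ∀ ω : Traj X N,
    q ω = timeMarg q 0 (ω 0) * ∏ n : Fin (N + 1), transP q n (ω n.castSucc) (ω n.succ)

/-- A process `q` is reciprocal w.r.t. a full-support reference process `qref` if its
bridges coincide with those of `qref` wherever they are defined. -/
def IsReciprocal (qref q : Traj X N → ℝ) : Prop :=
  ∀ a b : X, 0 < endMarg q a b → ∀ v : Fin N → X, bridge q a b v = bridge qref a b v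

/-- Reciprocal projection of `q` w.r.t. `qref`:
`proj_R(q)(x_0, x_in, x_1) = qref(x_in | x_0, x_1) · q(x_0, x_1)`. -/
noncomputable def projR (qref q : Traj X N → ℝ) (ω : Traj X N) : ℝ :=
  (qref ω / endMarg qref (ω 0) (ω (Fin.last (N + 1)))) *
    endMarg q (ω 0) (ω (Fin.last (N + 1)))

/-- Markovian projection of `q`:
`proj_M(q)(x_0, x_in, x_1) = q(x_0) ∏_{n=1}^{N+1} q(x_{t_n} | x_{t_{n-1}})`. -/
noncomputable def projM (q : Traj X N → ℝ) (ω : Traj X N) : ℝ :=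
  timeMarg q 0 (ω 0) * ∏ n : Fin (N + 1), transP q n (ω n.castSucc) (ω n.succ)

/-- Marginal of the bridge of `q` at time index `i`:
`q(x_{t_i} = y | x_0 = a, x_1 = b)`. -/
noncomputable def bridgeAt (q : Traj X N → ℝ) (i : Fin (N + 2)) (y a b : X) : ℝ :=
  (∑ ω : Traj X N, if ω 0 = a ∧ ω i = y ∧ ω (Fin.last (N + 1)) = b then q ω else 0) /
    endMarg q a b

/-- Conditional transition given the terminal point:
`q(x_{t_n} = z | x_{t_{n-1}} = y, x_1 = b)` for the step from time index `n` to `n+1`. -/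
noncomputable def condTrans (q : Traj X N → ℝ) (n : Fin (N + 1)) (y z b : X) : ℝ :=
  (∑ ω : Traj X N,
      if ω n.castSucc = y ∧ ω n.succ = z ∧ ω (Fin.last (N + 1)) = b then q ω else 0) /
    (∑ ω : Traj X N, if ω n.castSucc = y ∧ ω (Fin.last (N + 1)) = b then q ω else 0)

/-- Membership in `Π_N(p_0, p_1)`: a process with prescribed marginals at times 0 and 1. -/
def InPiN (p0 p1 : X → ℝ) (q : Traj X N → ℝ) : Prop :=
  IsPMF q ∧ (∀ x, timeMarg q 0 x = p0 x) ∧ (∀ x, timeMarg q (Fin.last (N + 1)) x = p1 x)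

/-- Membership in `Π(p_0, p_1)`: couplings on `X²` with prescribed marginals. -/
def InPi2 (p0 p1 : X → ℝ) (s : X × X → ℝ) : Prop :=
  IsPMF s ∧ (∀ a, ∑ b, s (a, b) = p0 a) ∧ (∀ b, ∑ a, s (a, b) = p1 b)

section Helpers

variable {X : Type*} [Fintype X] [DecidableEq X] {N : ℕ}

lemma glue_zero (a : X) (v : Fin N → X) (b : X) : glue a v b 0 = a := rfl

lemma glue_last (a : X) (v : Fin N → X) (b : X) :
    glue a v b (Fin.last (N + 1)) = b := by
  have h : (Fin.last (N + 1)) = (Fin.last N).succ := (Fin.succ_last N).symm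
  rw [glue, h, Fin.cons_succ, Fin.snoc_last]

lemma glue_of_ne_last {i : Fin (N + 2)} (h : i ≠ Fin.last (N + 1))
    (a : X) (v : Fin N → X) (b b' : X) : glue a v b i = glue a v b' i := by
  induction i using Fin.cases with
  | zero => rfl
  | succ j =>
    have hj : j ≠ Fin.last N := by
      rintro rfl; exact h (Fin.succ_last N)
    obtain ⟨k, rfl⟩ := Fin.exists_castSucc_eq.2 hj
    simp [glue]

lemma glue_of_ne_zero {i : Fin (N + 2)} (h : i ≠ 0)
    (a a' : X) (v : Fin N → X) (b : X) : glue a v b i = glue a' v b i := by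
  obtain ⟨j, rfl⟩ := Fin.exists_succ_eq.2 h
  simp [glue]

lemma endMarg_pos [Nonempty X] (q : Traj X N → ℝ) (hqpos : ∀ ω, 0 < q ω) (a b : X) :
    0 < endMarg q a b := by
  classical
  apply Finset.sum_pos' (fun ω _ => by split <;> simp [(hqpos ω).le])
  refine ⟨glue a (fun _ => Classical.arbitrary X) b, Finset.mem_univ _, ?_⟩
  rw [if_pos ⟨glue_zero _ _ _, glue_last _ _ _⟩]
  exact hqpos _

/-- Four-point identity for a Markov process with fixed inner path. -/
lemma markov_fourpoint (hN : 1 ≤ N) (q : Traj X N → ℝ) (hqM : IsMarkov q)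
    (v : Fin N → X) (a a' b b' : X) :
    q (glue a v b) * q (glue a' v b') = q (glue a v b') * q (glue a' v b) := by
  rw [hqM (glue a v b), hqM (glue a' v b'), hqM (glue a v b'), hqM (glue a' v b)]
  rw [glue_zero, glue_zero, glue_zero, glue_zero]
  have key : (∏ n : Fin (N + 1), transP q n (glue a v b n.castSucc) (glue a v b n.succ)) *
      (∏ n : Fin (N + 1), transP q n (glue a' v b' n.castSucc) (glue a' v b' n.succ)) =
      (∏ n : Fin (N + 1), transP q n (glue a v b' n.castSucc) (glue a v b' n.succ)) *
      (∏ n : Fin (N + 1), transP q n (glue a' v b n.castSucc) (glue a' v b n.succ)) := by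
    rw [← Finset.prod_mul_distrib, ← Finset.prod_mul_distrib]
    apply Finset.prod_congr rfl
    intro n _
    by_cases hn : n = 0
    · -- factor does not depend on b / b'
      have hsucc : n.succ ≠ Fin.last (N + 1) := by
        subst hn
        intro h
        have h2 : ((0 : Fin (N + 1)).succ : Fin (N + 2)).val = (Fin.last (N + 1)).val := by rw [h]
        simp only [Fin.val_succ, Fin.val_last, Fin.val_zero] at h2
        omega
      have hcs : n.castSucc ≠ Fin.last (N + 1) := (Fin.castSucc_lt_last n).ne
      rw [glue_of_ne_last hsucc a v b' b, glue_of_ne_last hsucc a' v b' b,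
          glue_of_ne_last hcs a v b' b, glue_of_ne_last hcs a' v b' b]
    · -- factor does not depend on a / a'
      have hcs0 : n.castSucc ≠ 0 := by
        simpa [Fin.castSucc_eq_zero_iff] using hn
      have hs0 : n.succ ≠ 0 := Fin.succ_ne_zero n
      have hcsl : n.castSucc ≠ Fin.last (N + 1) := (Fin.castSucc_lt_last n).ne
      rw [glue_of_ne_zero hcs0 a' a v b', glue_of_ne_zero hcs0 a' a v b,
          glue_of_ne_last hcsl a v b' b, glue_of_ne_last hcsl a v b b,
          glue_of_ne_zero hs0 a' a v b', glue_of_ne_zero hs0 a' a v b]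
      ring
  calc timeMarg q 0 a * (∏ n : Fin (N + 1), transP q n (glue a v b n.castSucc) (glue a v b n.succ)) *
        (timeMarg q 0 a' * ∏ n : Fin (N + 1), transP q n (glue a' v b' n.castSucc) (glue a' v b' n.succ))
      = timeMarg q 0 a * timeMarg q 0 a' *
        ((∏ n : Fin (N + 1), transP q n (glue a v b n.castSucc) (glue a v b n.succ)) *
         (∏ n : Fin (N + 1), transP q n (glue a' v b' n.castSucc) (glue a' v b' n.succ))) := by ring
    _ = timeMarg q 0 a * timeMarg q 0 a' *
        ((∏ n : Fin (N + 1), transP q n (glue a v b' n.castSucc) (glue a v b' n.succ)) *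
         (∏ n : Fin (N + 1), transP q n (glue a' v b n.castSucc) (glue a' v b n.succ))) := by rw [key]
    _ = _ := by ring

end Helpers

/-- Schrödinger system / fg-decomposition. If the full-support process
`q` is both Markov and reciprocal w.r.t. the full-support Markov reference `q^ref`, then
there exist strictly positive potentials `ψ, φ` with
`q(x_0, x_1) = ψ(x_0) · q^ref(x_1|x_0) · φ(x_1)`, where `q^ref(x_1|x_0)` is the conditional
of the endpoint marginal of `q^ref`. -/
theorem schrodinger_potentials
    {X : Type*} [Fintype X] [DecidableEq X] [Nonempty X] {N : ℕ} (hN : 1 ≤ N)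
    (qref : Traj X N → ℝ) (hqref : IsPMF qref) (hqrefpos : ∀ ω, 0 < qref ω)
    (hqrefM : IsMarkov qref)
    (q : Traj X N → ℝ) (hq : IsPMF q) (hqpos : ∀ ω, 0 < q ω)
    (hqM : IsMarkov q) (hqR : IsReciprocal qref q) :
    ∃ ψ φ : X → ℝ, (∀ x, 0 < ψ x) ∧ (∀ x, 0 < φ x) ∧
      ∀ a b : X, endMarg q a b =
        ψ a * (endMarg qref a b / ∑ b' : X, endMarg qref a b') * φ b := by
  classical
  set v0 : Fin N → X := fun _ => Classical.arbitrary X with hv0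
  -- positivity of endpoint marginals
  have hmq : ∀ a b : X, 0 < endMarg q a b := endMarg_pos q hqpos
  have hmr : ∀ a b : X, 0 < endMarg qref a b := endMarg_pos qref hqrefpos
  have hS : ∀ a : X, 0 < ∑ b' : X, endMarg qref a b' :=
    fun a => Finset.sum_pos (fun b _ => hmr a b) Finset.univ_nonempty
  -- the ratio F
  set F : X → X → ℝ := fun a b => endMarg q a b / endMarg qref a b with hF
  have hFpos : ∀ a b, 0 < F a b := fun a b => div_pos (hmq a b) (hmr a b)
  -- F a b equals the ratio of trajectory probabilities along the constant inner path
  have hFeq : ∀ a b : X, F a b = q (glue a v0 b) / qref (glue a v0 b) := by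
    intro a b
    have hb := hqR a b (hmq a b) v0
    unfold bridge at hb
    have h1 : qref (glue a v0 b) ≠ 0 := (hqrefpos _).ne'
    have h2 : endMarg qref a b ≠ 0 := (hmr a b).ne'
    have h3 : endMarg q a b ≠ 0 := (hmq a b).ne'
    field_simp at hb
    show endMarg q a b / endMarg qref a b = _
    rw [div_eq_div_iff h2 h1]
    linear_combination -hb
  -- four-point identity for F
  have hF4 : ∀ a a' b b' : X, F a b * F a' b' = F a b' * F a' b := by
    intro a a' b b'
    rw [hFeq a b, hFeq a' b', hFeq a b', hFeq a' b]
    rw [div_mul_div_comm, div_mul_div_comm,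
        markov_fourpoint hN q hqM v0 a a' b b',
        markov_fourpoint hN qref hqrefM v0 a a' b b']
  set a0 : X := Classical.arbitrary X
  refine ⟨fun a => F a a0 / F a0 a0 * (∑ b' : X, endMarg qref a b'),
    fun b => F a0 b, ?_, fun b => hFpos a0 b, ?_⟩
  · intro a
    exact mul_pos (div_pos (hFpos a a0) (hFpos a0 a0)) (hS a)
  · intro a b
    have h4 := hF4 a a0 b a0
    have hSne : (∑ b' : X, endMarg qref a b') ≠ 0 := (hS a).ne'
    have hrne : endMarg qref a b ≠ 0 := (hmr a b).ne'
    have hF00 : F a0 a0 ≠ 0 := (hFpos a0 a0).ne'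
    have key : endMarg q a b = F a b * endMarg qref a b := by
      rw [hF]; field_simp
    rw [key]
    have : F a b = F a a0 / F a0 a0 * F a0 b := by
      field_simp
      linear_combination h4
    rw [this]
    field_simp
end

section
/- Let X be a nonempty finite set, N ≥ 1, let q^ref be a Markov process on X^{N+2} with full support, and let q be a process on X^{N+2} reciprocal with respect to q^ref whose endpoint coupling q(x_0, x_1) has full support. Then for every n ∈ {1, …, N+1} and all states y, z, x_1 ∈ X, the conditional transition of q given the endpoint matches that of the reference bridge: q(x_{t_n} = z | x_{t_{n-1}} = y, x_1) = q^ref(x_{t_n} = z | x_{t_{n-1}} = y, x_1) (with the conventions x_{t_0} := x_0 and x_{t_{N+1}} := x_1). -/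
open Finset

variable {X : Type*} [Fintype X] [DecidableEq X] {N : ℕ}

section Aux

variable {X : Type*} [Fintype X] [DecidableEq X] {N : ℕ}

/-- Splice two trajectories at index `m`: take `ω` up to `m`, `ω'` after. -/
def splice (m : Fin (N + 2)) (ω ω' : Traj X N) : Traj X N :=
  fun i => if i ≤ m then ω i else ω' i

lemma splice_involutive (m : Fin (N + 2)) :
    Function.Involutive
      (fun p : Traj X N × Traj X N => (splice m p.1 p.2, splice m p.2 p.1)) := by
  intro p
  refine Prod.ext ?_ ?_ <;> funext i <;> simp only [splice] <;> split_ifs <;> rfl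

lemma glue_self (ω : Traj X N) :
    glue (ω 0) (fun k => ω k.succ.castSucc) (ω (Fin.last (N + 1))) = ω := by
  funext i
  refine Fin.cases ?_ (fun j => ?_) i
  · simp [glue]
  · refine Fin.lastCases ?_ (fun k => ?_) j
    · simp only [glue, Fin.cons_succ, Fin.snoc_last]
      rw [Fin.succ_last]
    · simp only [glue, Fin.cons_succ, Fin.snoc_castSucc]
      rw [Fin.succ_castSucc]

lemma markov_splice_mul (qref : Traj X N → ℝ) (hM : IsMarkov qref) (n : Fin (N + 1))
    (ω ω' : Traj X N) (h : ω n.castSucc = ω' n.castSucc) :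
    qref (splice n.castSucc ω ω') * qref (splice n.castSucc ω' ω) = qref ω * qref ω' := by
  have h0 : ∀ α β : Traj X N, splice n.castSucc α β 0 = α 0 :=
    fun α β => if_pos (Fin.zero_le _)
  have hcsP : ∀ (α β : Traj X N) (k : Fin (N + 1)), (k : ℕ) ≤ (n : ℕ) →
      splice n.castSucc α β k.castSucc = α k.castSucc := by
    intro α β k hk
    exact if_pos (by rw [Fin.le_def]; simpa using hk)
  have hcsN : ∀ (α β : Traj X N) (k : Fin (N + 1)), ¬ (k : ℕ) ≤ (n : ℕ) →
      splice n.castSucc α β k.castSucc = β k.castSucc := by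
    intro α β k hk
    exact if_neg (by rw [Fin.le_def]; simpa using hk)
  have hscP : ∀ (α β : Traj X N) (k : Fin (N + 1)), (k : ℕ) + 1 ≤ (n : ℕ) →
      splice n.castSucc α β k.succ = α k.succ := by
    intro α β k hk
    exact if_pos (by rw [Fin.le_def]; simpa using hk)
  have hscN : ∀ (α β : Traj X N) (k : Fin (N + 1)), ¬ (k : ℕ) + 1 ≤ (n : ℕ) →
      splice n.castSucc α β k.succ = β k.succ := by
    intro α β k hk
    exact if_neg (by rw [Fin.le_def]; simpa using hk)
  have hprod :
      (∏ k : Fin (N + 1), transP qref k (splice n.castSucc ω ω' k.castSucc)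
          (splice n.castSucc ω ω' k.succ)) *
      (∏ k : Fin (N + 1), transP qref k (splice n.castSucc ω' ω k.castSucc)
          (splice n.castSucc ω' ω k.succ)) =
      (∏ k : Fin (N + 1), transP qref k (ω k.castSucc) (ω k.succ)) *
      (∏ k : Fin (N + 1), transP qref k (ω' k.castSucc) (ω' k.succ)) := by
    rw [← Finset.prod_mul_distrib, ← Finset.prod_mul_distrib]
    refine Finset.prod_congr rfl (fun k _ => ?_)
    by_cases h1 : (k : ℕ) + 1 ≤ (n : ℕ)
    · rw [hcsP ω ω' k (by omega), hscP ω ω' k h1, hcsP ω' ω k (by omega), hscP ω' ω k h1]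
    · by_cases h2 : (k : ℕ) ≤ (n : ℕ)
      · have hkn : k = n := Fin.ext (by omega)
        subst hkn
        rw [hcsP ω ω' k le_rfl, hscN ω ω' k h1, hcsP ω' ω k le_rfl, hscN ω' ω k h1, h]
        ring
      · rw [hcsN ω ω' k h2, hscN ω ω' k (by omega), hcsN ω' ω k h2, hscN ω' ω k (by omega)]
        ring
  rw [hM (splice n.castSucc ω ω'), hM (splice n.castSucc ω' ω), hM ω, hM ω',
    h0 ω ω', h0 ω' ω]
  linear_combination (timeMarg qref 0 (ω 0) * timeMarg qref 0 (ω' 0)) * hprod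

lemma core_swap (qref : Traj X N → ℝ) (hM : IsMarkov qref) (n : Fin (N + 1)) (y z b : X)
    (w : X → ℝ) :
    (∑ ω : Traj X N,
        if ω n.castSucc = y ∧ ω n.succ = z ∧ ω (Fin.last (N + 1)) = b then
          w (ω 0) * qref ω else 0) *
      (∑ ω : Traj X N, if ω n.castSucc = y ∧ ω (Fin.last (N + 1)) = b then qref ω else 0) =
    (∑ ω : Traj X N,
        if ω n.castSucc = y ∧ ω (Fin.last (N + 1)) = b then w (ω 0) * qref ω else 0) *
      (∑ ω : Traj X N,
        if ω n.castSucc = y ∧ ω n.succ = z ∧ ω (Fin.last (N + 1)) = b then qref ω else 0) := by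
  have hmul : ∀ F G : Traj X N → ℝ,
      (∑ ω, F ω) * (∑ ω, G ω) = ∑ p : Traj X N × Traj X N, F p.1 * G p.2 := by
    intro F G
    rw [Finset.sum_mul_sum]
    exact (Fintype.sum_prod_type (fun p : Traj X N × Traj X N => F p.1 * G p.2)).symm
  rw [hmul, hmul]
  rw [← Equiv.sum_comp (Function.Involutive.toPerm _ (splice_involutive n.castSucc))]
  refine Finset.sum_congr rfl (fun p _ => ?_)
  obtain ⟨ω, ω'⟩ := p
  simp only [Function.Involutive.coe_toPerm]
  have hcs1 : splice n.castSucc ω ω' n.castSucc = ω n.castSucc := if_pos le_rfl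
  have hcs2 : splice n.castSucc ω' ω n.castSucc = ω' n.castSucc := if_pos le_rfl
  have hnot_sc : ¬ ((n.succ : Fin (N + 2)) ≤ n.castSucc) := by
    rw [Fin.le_def]; simp
  have hnot_last : ¬ ((Fin.last (N + 1) : Fin (N + 2)) ≤ n.castSucc) := by
    rw [Fin.le_def]; simp; have := n.isLt; omega
  have hsc1 : splice n.castSucc ω ω' n.succ = ω' n.succ := if_neg hnot_sc
  have hl1 : splice n.castSucc ω ω' (Fin.last (N + 1)) = ω' (Fin.last (N + 1)) :=
    if_neg hnot_last
  have hl2 : splice n.castSucc ω' ω (Fin.last (N + 1)) = ω (Fin.last (N + 1)) :=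
    if_neg hnot_last
  have h01 : splice n.castSucc ω ω' 0 = ω 0 := if_pos (Fin.zero_le _)
  have itemul : ∀ (P Q : Prop) [Decidable P] [Decidable Q] (A B : ℝ),
      (if P then A else 0) * (if Q then B else 0) = if P ∧ Q then A * B else 0 := by
    intro P Q _ _ A B
    by_cases hP : P <;> by_cases hQ : Q <;> simp [hP, hQ]
  rw [itemul]; refine (itemul _ _ _ _).trans ?_
  have hiff :
      ((splice n.castSucc ω ω' n.castSucc = y ∧ splice n.castSucc ω ω' n.succ = z ∧
          splice n.castSucc ω ω' (Fin.last (N + 1)) = b) ∧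
        (splice n.castSucc ω' ω n.castSucc = y ∧
          splice n.castSucc ω' ω (Fin.last (N + 1)) = b)) ↔
      ((ω n.castSucc = y ∧ ω (Fin.last (N + 1)) = b) ∧
        (ω' n.castSucc = y ∧ ω' n.succ = z ∧ ω' (Fin.last (N + 1)) = b)) := by
    rw [hcs1, hcs2, hsc1, hl1, hl2]
    tauto
  by_cases hc : (ω n.castSucc = y ∧ ω (Fin.last (N + 1)) = b) ∧
      (ω' n.castSucc = y ∧ ω' n.succ = z ∧ ω' (Fin.last (N + 1)) = b)
  · rw [if_pos (hiff.mpr hc), if_pos hc, h01]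
    have hswap := markov_splice_mul qref hM n ω ω' (hc.1.1.trans hc.2.1.symm)
    linear_combination w (ω 0) * hswap
  · rw [if_neg (fun h => hc (hiff.mp h)), if_neg hc]

end Aux

/-- Conditional transitions of a reciprocal process match the reference
bridge. For `q` reciprocal w.r.t. the full-support Markov reference `q^ref`, with
full-support endpoint coupling, for every transition `n ∈ {1, …, N+1}` and states
`y, z, x_1`: `q(x_{t_n} = z | x_{t_{n-1}} = y, x_1) = q^ref(x_{t_n} = z | x_{t_{n-1}} = y, x_1)`
(with the conventions `x_{t_0} := x_0`, `x_{t_{N+1}} := x_1`). -/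
theorem reciprocal_cond_trans
    {X : Type*} [Fintype X] [DecidableEq X] [Nonempty X] {N : ℕ} (hN : 1 ≤ N)
    (qref : Traj X N → ℝ) (hqref : IsPMF qref) (hqrefpos : ∀ ω, 0 < qref ω)
    (hqrefM : IsMarkov qref)
    (q : Traj X N → ℝ) (hq : IsPMF q) (hqR : IsReciprocal qref q)
    (hqend : ∀ a b : X, 0 < endMarg q a b) :
    ∀ (n : Fin (N + 1)) (y z b : X),
      (∑ ω : Traj X N,
          if ω n.castSucc = y ∧ ω n.succ = z ∧ ω (Fin.last (N + 1)) = b then q ω else 0) /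
        (∑ ω : Traj X N,
          if ω n.castSucc = y ∧ ω (Fin.last (N + 1)) = b then q ω else 0) =
      condTrans qref n y z b := by
  have herefpos : ∀ a b : X, 0 < endMarg qref a b := by
    intro a b
    unfold endMarg
    refine Finset.sum_pos' (fun ω _ => ?_) ⟨fun i => if i = 0 then a else b,
      Finset.mem_univ _, ?_⟩
    · split_ifs
      · exact (hqrefpos ω).le
      · exact le_rfl
    · rw [if_pos ⟨if_pos rfl, if_neg (by simp [Fin.ext_iff])⟩]
      exact hqrefpos _
  have hqeq : ∀ ω : Traj X N,
      q ω = (endMarg q (ω 0) (ω (Fin.last (N + 1))) /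
        endMarg qref (ω 0) (ω (Fin.last (N + 1)))) * qref ω := by
    intro ω
    have hb := hqR (ω 0) (ω (Fin.last (N + 1))) (hqend _ _) (fun k => ω k.succ.castSucc)
    unfold bridge at hb
    rw [glue_self ω] at hb
    have h1 := (hqend (ω 0) (ω (Fin.last (N + 1)))).ne'
    have h2 := (herefpos (ω 0) (ω (Fin.last (N + 1)))).ne'
    field_simp at hb ⊢
    linarith [hb]
  have hqpos : ∀ ω : Traj X N, 0 < q ω := by
    intro ω
    rw [hqeq ω]
    exact mul_pos (div_pos (hqend _ _) (herefpos _ _)) (hqrefpos ω)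
  intro n y z b
  set w : X → ℝ := fun a => endMarg q a b / endMarg qref a b with hw
  have enum : (∑ ω : Traj X N,
      if ω n.castSucc = y ∧ ω n.succ = z ∧ ω (Fin.last (N + 1)) = b then q ω else 0) =
      ∑ ω : Traj X N, if ω n.castSucc = y ∧ ω n.succ = z ∧ ω (Fin.last (N + 1)) = b then
        w (ω 0) * qref ω else 0 := by
    refine Finset.sum_congr rfl (fun ω _ => ?_)
    split_ifs with h
    · rw [hqeq ω, h.2.2, hw]
    · rfl
  have eden : (∑ ω : Traj X N,
      if ω n.castSucc = y ∧ ω (Fin.last (N + 1)) = b then q ω else 0) =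
      ∑ ω : Traj X N, if ω n.castSucc = y ∧ ω (Fin.last (N + 1)) = b then
        w (ω 0) * qref ω else 0 := by
    refine Finset.sum_congr rfl (fun ω _ => ?_)
    split_ifs with h
    · rw [hqeq ω, h.2, hw]
    · rfl
  have hwitness : ((fun i => if i = n.castSucc then y else b : Traj X N) n.castSucc = y ∧
      (fun i => if i = n.castSucc then y else b : Traj X N) (Fin.last (N + 1)) = b) := by
    constructor
    · exact if_pos rfl
    · refine if_neg ?_
      rw [Fin.ext_iff]
      simp only [Fin.val_last, Fin.coe_castSucc]
      omega
  have hden : 0 < ∑ ω : Traj X N,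
      if ω n.castSucc = y ∧ ω (Fin.last (N + 1)) = b then q ω else 0 := by
    refine Finset.sum_pos' (fun ω _ => ?_) ⟨fun i => if i = n.castSucc then y else b,
      Finset.mem_univ _, ?_⟩
    · split_ifs
      · exact (hqpos ω).le
      · exact le_rfl
    · rw [if_pos hwitness]
      exact hqpos _
  have hdenR : 0 < ∑ ω : Traj X N,
      if ω n.castSucc = y ∧ ω (Fin.last (N + 1)) = b then qref ω else 0 := by
    refine Finset.sum_pos' (fun ω _ => ?_) ⟨fun i => if i = n.castSucc then y else b,
      Finset.mem_univ _, ?_⟩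
    · split_ifs
      · exact (hqrefpos ω).le
      · exact le_rfl
    · rw [if_pos hwitness]
      exact hqrefpos _
  unfold condTrans
  rw [div_eq_div_iff hden.ne' hdenR.ne', enum, eden]
  linear_combination core_swap qref hqrefM n y z b w
end
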